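/- arXiv:1411.7291 — 2 statements merged into one kernel-verified Lean document; each statement's English description precedes it below -/
import Mathlib

section
/- Let a_1, …, a_N be complex numbers and b_m = Σ_{nν = m, 1 ≤ n,ν ≤ N} a_n a_ν. Then Σ_{m=1}^{N²} |b_m|² ≤ N² Σ_{n,ν ≤ N} |a_n|² |a_ν|² / lcm(n,ν). -/
open Finset

lemma card_dvd_Icc (K L : ℕ) :
    ((Finset.Icc 1 K).filter (fun m => L ∣ m)).card = K / L := by
  rw [← Nat.card_multiples' K L]
  congr 1
  ext m
  simp only [Finset.mem_filter, Finset.mem_Icc, Finset.mem_range, Nat.lt_succ_iff,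
    Nat.one_le_iff_ne_zero]
  tauto

theorem stmt_8 (N : ℕ) (a : ℕ → ℂ) (b : ℕ → ℂ)
    (hb : ∀ m, b m = ∑ p ∈ (Finset.Icc 1 N ×ˢ Finset.Icc 1 N).filter
        (fun p => p.1 * p.2 = m), a p.1 * a p.2) :
    ∑ m ∈ Finset.Icc 1 (N ^ 2), ‖b m‖ ^ 2
      ≤ (N : ℝ) ^ 2 * ∑ n ∈ Finset.Icc 1 N, ∑ ν ∈ Finset.Icc 1 N,
          ‖a n‖ ^ 2 * ‖a ν‖ ^ 2 / (Nat.lcm n ν : ℝ) := by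
  classical
  set S : ℕ → ℝ := fun m => ∑ n ∈ (Finset.Icc 1 N).filter (· ∣ m), ‖a n‖ ^ 2 with hS
  have hSnn : ∀ m, 0 ≤ S m := fun m => Finset.sum_nonneg fun n _ => by positivity
  have key : ∀ m ∈ Finset.Icc 1 (N ^ 2), ‖b m‖ ≤ S m := by
    intro m hm
    obtain ⟨hm1, hm2⟩ := Finset.mem_Icc.mp hm
    rw [hb]
    set T := (Finset.Icc 1 N ×ˢ Finset.Icc 1 N).filter (fun p => p.1 * p.2 = m) with hT
    have swapmem : ∀ p ∈ T, p.swap ∈ T := by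
      intro p hp
      simp only [hT, Finset.mem_filter, Finset.mem_product] at hp ⊢
      exact ⟨⟨hp.1.2, hp.1.1⟩, by rw [Prod.fst_swap, Prod.snd_swap, Nat.mul_comm]; exact hp.2⟩
    have hsymm : ∑ p ∈ T, ‖a p.2‖ ^ 2 = ∑ p ∈ T, ‖a p.1‖ ^ 2 := by
      refine Finset.sum_nbij' (fun p => p.swap) (fun p => p.swap) swapmem swapmem
        (fun p _ => Prod.swap_swap p) (fun p _ => Prod.swap_swap p) (fun p _ => rfl)
    calc ‖∑ p ∈ T, a p.1 * a p.2‖ ≤ ∑ p ∈ T, ‖a p.1 * a p.2‖ := norm_sum_le _ _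
      _ ≤ ∑ p ∈ T, (‖a p.1‖ ^ 2 + ‖a p.2‖ ^ 2) / 2 := by
          refine Finset.sum_le_sum fun p _ => ?_
          rw [norm_mul]
          nlinarith [sq_nonneg (‖a p.1‖ - ‖a p.2‖), norm_nonneg (a p.1), norm_nonneg (a p.2)]
      _ = ∑ p ∈ T, ‖a p.1‖ ^ 2 := by
          rw [← Finset.sum_div, Finset.sum_add_distrib, hsymm]; ring
      _ = ∑ n ∈ T.image Prod.fst, ‖a n‖ ^ 2 := by
          symm
          apply Finset.sum_image
          intro p hp q hq hpq
          simp only [Finset.mem_coe, hT, Finset.mem_filter, Finset.mem_product, Finset.mem_Icc] at hp hq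
          have h1 : 0 < p.1 := hp.1.1.1
          have h2 : p.1 * p.2 = p.1 * q.2 := by rw [hp.2, hpq, hq.2]
          exact Prod.ext hpq (Nat.eq_of_mul_eq_mul_left h1 h2)
      _ ≤ S m := by
          refine Finset.sum_le_sum_of_subset_of_nonneg ?_ (fun n _ _ => by positivity)
          intro n hn
          simp only [Finset.mem_image] at hn
          obtain ⟨p, hp, rfl⟩ := hn
          simp only [hT, Finset.mem_filter, Finset.mem_product] at hp
          exact Finset.mem_filter.mpr ⟨hp.1.1, ⟨p.2, hp.2.symm⟩⟩
  have key2 : ∀ m ∈ Finset.Icc 1 (N ^ 2), ‖b m‖ ^ 2 ≤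
      ∑ n ∈ Finset.Icc 1 N, ∑ ν ∈ Finset.Icc 1 N,
        if Nat.lcm n ν ∣ m then ‖a n‖ ^ 2 * ‖a ν‖ ^ 2 else 0 := by
    intro m hm
    have h1 : ‖b m‖ ^ 2 ≤ S m * S m := by
      have := key m hm
      nlinarith [norm_nonneg (b m), hSnn m]
    refine h1.trans_eq ?_
    calc S m * S m = ∑ n ∈ (Finset.Icc 1 N).filter (· ∣ m),
          ∑ ν ∈ (Finset.Icc 1 N).filter (· ∣ m), ‖a n‖ ^ 2 * ‖a ν‖ ^ 2 := by
          rw [hS, Finset.sum_mul_sum]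
      _ = ∑ n ∈ Finset.Icc 1 N, ∑ ν ∈ Finset.Icc 1 N,
          if n ∣ m ∧ ν ∣ m then ‖a n‖ ^ 2 * ‖a ν‖ ^ 2 else 0 := by
          rw [Finset.sum_filter]
          refine Finset.sum_congr rfl fun n _ => ?_
          by_cases hn : n ∣ m
          · simp [hn, Finset.sum_filter]
          · simp [hn]
      _ = ∑ n ∈ Finset.Icc 1 N, ∑ ν ∈ Finset.Icc 1 N,
          if Nat.lcm n ν ∣ m then ‖a n‖ ^ 2 * ‖a ν‖ ^ 2 else 0 := by
          refine Finset.sum_congr rfl fun n _ => Finset.sum_congr rfl fun ν _ => ?_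
          exact if_congr Nat.lcm_dvd_iff.symm rfl rfl
  calc ∑ m ∈ Finset.Icc 1 (N ^ 2), ‖b m‖ ^ 2
      ≤ ∑ m ∈ Finset.Icc 1 (N ^ 2), ∑ n ∈ Finset.Icc 1 N, ∑ ν ∈ Finset.Icc 1 N,
        if Nat.lcm n ν ∣ m then ‖a n‖ ^ 2 * ‖a ν‖ ^ 2 else 0 :=
      Finset.sum_le_sum key2
    _ = ∑ n ∈ Finset.Icc 1 N, ∑ ν ∈ Finset.Icc 1 N,
        ((N ^ 2 / Nat.lcm n ν : ℕ) : ℝ) * (‖a n‖ ^ 2 * ‖a ν‖ ^ 2) := by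
      rw [Finset.sum_comm]
      refine Finset.sum_congr rfl fun n _ => ?_
      rw [Finset.sum_comm]
      refine Finset.sum_congr rfl fun ν _ => ?_
      rw [← Finset.sum_filter, Finset.sum_const, ← card_dvd_Icc (N ^ 2) (Nat.lcm n ν),
        nsmul_eq_mul]
    _ ≤ ∑ n ∈ Finset.Icc 1 N, ∑ ν ∈ Finset.Icc 1 N,
        (N : ℝ) ^ 2 * (‖a n‖ ^ 2 * ‖a ν‖ ^ 2 / (Nat.lcm n ν : ℝ)) := by
      refine Finset.sum_le_sum fun n hn => Finset.sum_le_sum fun ν hν => ?_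
      have hL : (0 : ℝ) < (Nat.lcm n ν : ℝ) := by
        have hn1 := (Finset.mem_Icc.mp hn).1
        have hν1 := (Finset.mem_Icc.mp hν).1
        have : 0 < Nat.lcm n ν := Nat.pos_of_ne_zero (Nat.lcm_ne_zero (by omega) (by omega))
        exact_mod_cast this
      have hcast : ((N ^ 2 / Nat.lcm n ν : ℕ) : ℝ) ≤ (N : ℝ) ^ 2 / (Nat.lcm n ν : ℝ) := by
        calc ((N ^ 2 / Nat.lcm n ν : ℕ) : ℝ) ≤ ((N ^ 2 : ℕ) : ℝ) / (Nat.lcm n ν : ℝ) :=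
            Nat.cast_div_le
          _ = (N : ℝ) ^ 2 / (Nat.lcm n ν : ℝ) := by push_cast; ring
      have hxnn : (0 : ℝ) ≤ ‖a n‖ ^ 2 * ‖a ν‖ ^ 2 := by positivity
      calc ((N ^ 2 / Nat.lcm n ν : ℕ) : ℝ) * (‖a n‖ ^ 2 * ‖a ν‖ ^ 2)
          ≤ ((N : ℝ) ^ 2 / (Nat.lcm n ν : ℝ)) * (‖a n‖ ^ 2 * ‖a ν‖ ^ 2) :=
            mul_le_mul_of_nonneg_right hcast hxnn
        _ = (N : ℝ) ^ 2 * (‖a n‖ ^ 2 * ‖a ν‖ ^ 2 / (Nat.lcm n ν : ℝ)) := by ring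
    _ = (N : ℝ) ^ 2 * ∑ n ∈ Finset.Icc 1 N, ∑ ν ∈ Finset.Icc 1 N,
        ‖a n‖ ^ 2 * ‖a ν‖ ^ 2 / (Nat.lcm n ν : ℝ) := by
      rw [Finset.mul_sum]
      exact Finset.sum_congr rfl fun n _ => by rw [Finset.mul_sum]
end

section
/- Assume the mean-value asymptotics: (1/T)∫_0^T |Σ_{n=1}^N n^{-it}|² dt → N and (1/T)∫_0^T |Σ_{n=1}^N n^{-it}|⁴ dt → S(N) as T → ∞, where S(N) = #{(n,ν,μ,λ) ∈ [1,N]⁴ : nν = μλ} ≤ C N² log N for N ≥ 2 and some absolute constant C. Then for each 0 < r < 2 there is a constant C_r > 0 such that liminf_{T→∞} ((1/T)∫_0^T |Σ_{n=1}^N n^{-it}|^r dt)^{1/r} ≥ C_r N^{1/2} / (log N)^{1/r - 1/2} for all N ≥ 2. -/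
open MeasureTheory Filter Real

lemma memLp_aux {g : ℝ → ℝ} (hg : Continuous g) {s e T : ℝ} (hs : 0 ≤ s) :
    MemLp (fun t => g t ^ s) (ENNReal.ofReal e) (volume.restrict (Set.Ioc 0 T)) := by
  have hc : Continuous (fun t => g t ^ s) := hg.rpow_const (fun x => Or.inr hs)
  haveI : IsFiniteMeasure (volume.restrict (Set.Ioc (0:ℝ) T)) := by
    constructor
    rw [Measure.restrict_apply_univ, Real.volume_Ioc]
    exact ENNReal.ofReal_lt_top
  obtain ⟨M, hM⟩ := (isCompact_Icc (a := (0:ℝ)) (b := T)).exists_bound_of_continuousOn hc.continuousOn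
  exact MemLp.of_bound hc.aestronglyMeasurable M
    ((ae_restrict_iff' measurableSet_Ioc).2 (ae_of_all _ fun x hx => hM x (Set.Ioc_subset_Icc_self hx)))

lemma holder_avg {g : ℝ → ℝ} (hg : Continuous g) (hg0 : ∀ t, 0 ≤ g t) {r T : ℝ}
    (hr0 : 0 < r) (hr2 : r < 2) (hT : 0 < T) :
    (1/T) * ∫ t in Set.Ioc (0:ℝ) T, g t ^ 2 ≤
      ((1/T) * ∫ t in Set.Ioc (0:ℝ) T, g t ^ r) ^ (2/(4-r)) *
      ((1/T) * ∫ t in Set.Ioc (0:ℝ) T, g t ^ 4) ^ ((2-r)/(4-r)) := by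
  set p : ℝ := (4-r)/2 with hp
  set q : ℝ := (4-r)/(2-r) with hq
  have h4r : (0:ℝ) < 4 - r := by linarith
  have h2r : (0:ℝ) < 2 - r := by linarith
  have hp1 : 1 < p := by rw [hp, lt_div_iff₀ (by norm_num : (0:ℝ) < 2)]; linarith
  have hp0 : (0:ℝ) < p := by linarith
  have hq0 : (0:ℝ) < q := div_pos h4r h2r
  have hpq : p.HolderConjugate q := by
    rw [Real.holderConjugate_iff]
    constructor
    · exact hp1
    · rw [hp, hq]; field_simp; ring
  have hinvp : 1/p = 2/(4-r) := by rw [hp, one_div_div]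
  have hinvq : 1/q = (2-r)/(4-r) := by rw [hq, one_div_div]
  set μ := volume.restrict (Set.Ioc (0:ℝ) T) with hμ
  have key : ∫ t, (g t ^ (r/p)) * (g t ^ (4/q)) ∂μ ≤
      (∫ t, (g t ^ (r/p)) ^ p ∂μ) ^ (1/p) * (∫ t, (g t ^ (4/q)) ^ q ∂μ) ^ (1/q) :=
    integral_mul_le_Lp_mul_Lq_of_nonneg hpq
      (ae_of_all _ fun t => rpow_nonneg (hg0 t) _)
      (ae_of_all _ fun t => rpow_nonneg (hg0 t) _)
      (memLp_aux hg (by positivity)) (memLp_aux hg (by positivity))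
  have hsum : r/p + 4/q = 2 := by rw [hp, hq]; field_simp; ring
  have e1 : ∀ t, (g t ^ (r/p)) * (g t ^ (4/q)) = g t ^ 2 := by
    intro t
    rw [← Real.rpow_add' (hg0 t) (by rw [hsum]; norm_num), hsum,
      show (2:ℝ) = ((2:ℕ):ℝ) by norm_num, Real.rpow_natCast]
  have e2 : ∀ t, (g t ^ (r/p)) ^ p = g t ^ r := by
    intro t
    rw [← Real.rpow_mul (hg0 t), div_mul_cancel₀ _ hp0.ne']
  have e3 : ∀ t, (g t ^ (4/q)) ^ q = g t ^ 4 := by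
    intro t
    rw [← Real.rpow_mul (hg0 t), div_mul_cancel₀ _ hq0.ne',
      show (4:ℝ) = ((4:ℕ):ℝ) by norm_num, Real.rpow_natCast]
  simp only [e1, e2, e3] at key
  have hA : 0 ≤ ∫ t, g t ^ r ∂μ := integral_nonneg fun t => rpow_nonneg (hg0 t) _
  have hB : 0 ≤ ∫ t, g t ^ 4 ∂μ := integral_nonneg fun t => pow_nonneg (hg0 t) _
  have hT' : (0:ℝ) < 1/T := by positivity
  rw [← hinvp, ← hinvq, Real.mul_rpow hT'.le hA, Real.mul_rpow hT'.le hB,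
    show (1/T)^(1/p) * (∫ t, g t ^ r ∂μ)^(1/p) * ((1/T)^(1/q) * (∫ t, g t ^ 4 ∂μ)^(1/q))
      = ((1/T)^(1/p) * (1/T)^(1/q)) * ((∫ t, g t ^ r ∂μ)^(1/p) * (∫ t, g t ^ 4 ∂μ)^(1/q)) by ring,
    ← Real.rpow_add hT', show 1/p + 1/q = 1 by
      rw [one_div, one_div]; exact hpq.inv_add_inv_eq_one,
    Real.rpow_one]
  exact mul_le_mul_of_nonneg_left key hT'.le

lemma ratio_le {g : ℝ → ℝ} (hg : Continuous g) (hg0 : ∀ t, 0 ≤ g t) {r T : ℝ}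
    (hr0 : 0 < r) (hr2 : r < 2) (hT : 0 < T) :
    ((1/T) * ∫ t in Set.Ioc (0:ℝ) T, g t ^ 2) ^ ((4-r)/2) /
      ((1/T) * ∫ t in Set.Ioc (0:ℝ) T, g t ^ 4) ^ ((2-r)/2)
      ≤ (1/T) * ∫ t in Set.Ioc (0:ℝ) T, g t ^ r := by
  have h4r : (0:ℝ) < 4 - r := by linarith
  have h2r : (0:ℝ) < 2 - r := by linarith
  set c := (1/T) * ∫ t in Set.Ioc (0:ℝ) T, g t ^ 2 with hc
  set a := (1/T) * ∫ t in Set.Ioc (0:ℝ) T, g t ^ r with ha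
  set b := (1/T) * ∫ t in Set.Ioc (0:ℝ) T, g t ^ 4 with hb
  have hkey : c ≤ a ^ (2/(4-r)) * b ^ ((2-r)/(4-r)) := holder_avg hg hg0 hr0 hr2 hT
  have hc0 : 0 ≤ c := by
    apply mul_nonneg (by positivity) (integral_nonneg fun t => pow_nonneg (hg0 t) _)
  have ha0 : 0 ≤ a := by
    apply mul_nonneg (by positivity) (integral_nonneg fun t => rpow_nonneg (hg0 t) _)
  have hb0 : 0 ≤ b := by
    apply mul_nonneg (by positivity) (integral_nonneg fun t => pow_nonneg (hg0 t) _)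
  rcases eq_or_lt_of_le hb0 with hb1 | hb1
  · have : c ≤ 0 := by
      rw [← hb1, Real.zero_rpow (by positivity), mul_zero] at hkey
      exact hkey
    have hc' : c = 0 := le_antisymm this hc0
    rw [hc', Real.zero_rpow (by positivity), zero_div]
    exact ha0
  · rw [div_le_iff₀ (Real.rpow_pos_of_pos hb1 _)]
    have step : c ^ ((4-r)/2) ≤ (a ^ (2/(4-r)) * b ^ ((2-r)/(4-r))) ^ ((4-r)/2) :=
      Real.rpow_le_rpow hc0 hkey (by positivity)
    refine step.trans_eq ?_
    rw [Real.mul_rpow (by positivity) (by positivity), ← Real.rpow_mul ha0, ← Real.rpow_mul hb1.le,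
      show 2/(4-r) * ((4-r)/2) = 1 by field_simp,
      show (2-r)/(4-r) * ((4-r)/2) = (2-r)/2 by field_simp,
      Real.rpow_one]

lemma power_mean {g : ℝ → ℝ} (hg : Continuous g) (hg0 : ∀ t, 0 ≤ g t) {r T : ℝ}
    (hr0 : 0 < r) (hr2 : r < 2) (hT : 0 < T) :
    (1/T) * ∫ t in Set.Ioc (0:ℝ) T, g t ^ r ≤
      ((1/T) * ∫ t in Set.Ioc (0:ℝ) T, g t ^ 2) ^ (r/2) := by
  have h2r : (0:ℝ) < 2 - r := by linarith
  set p : ℝ := 2/r with hp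
  set q : ℝ := 2/(2-r) with hq
  have hpq : p.HolderConjugate q := by
    rw [Real.holderConjugate_iff]
    constructor
    · rw [hp, lt_div_iff₀ hr0]; linarith
    · rw [hp, hq]; field_simp; ring
  set μ := volume.restrict (Set.Ioc (0:ℝ) T) with hμ
  haveI : IsFiniteMeasure μ := by
    constructor
    rw [hμ, Measure.restrict_apply_univ, Real.volume_Ioc]
    exact ENNReal.ofReal_lt_top
  have key : ∫ t, (g t ^ r) * 1 ∂μ ≤
      (∫ t, (g t ^ r) ^ p ∂μ) ^ (1/p) * (∫ t, (1:ℝ) ^ q ∂μ) ^ (1/q) :=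
    integral_mul_le_Lp_mul_Lq_of_nonneg hpq
      (ae_of_all _ fun t => rpow_nonneg (hg0 t) _)
      (ae_of_all _ fun t => zero_le_one)
      (memLp_aux hg hr0.le) (memLp_const 1)
  have e1 : ∀ t : ℝ, (g t ^ r) * 1 = g t ^ r := fun t => mul_one _
  have e2 : ∀ t, (g t ^ r) ^ p = g t ^ 2 := by
    intro t
    rw [← Real.rpow_mul (hg0 t), hp, mul_div_cancel₀ _ hr0.ne',
      show (2:ℝ) = ((2:ℕ):ℝ) by norm_num, Real.rpow_natCast]
  simp only [e1, e2, Real.one_rpow] at key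
  have e4 : (∫ t, (1:ℝ) ∂μ) = T := by
    rw [hμ, setIntegral_const, Measure.real, Real.volume_Ioc, smul_eq_mul, mul_one, sub_zero,
      ENNReal.toReal_ofReal hT.le]
  rw [e4] at key
  have hinvp : 1/p = r/2 := by rw [hp, one_div_div]
  have hinvq : 1/q = (2-r)/2 := by rw [hq, one_div_div]
  have hI2 : 0 ≤ ∫ t, g t ^ 2 ∂μ := integral_nonneg fun t => pow_nonneg (hg0 t) _
  calc (1/T) * ∫ t, g t ^ r ∂μ
      ≤ (1/T) * ((∫ t, g t ^ 2 ∂μ) ^ (1/p) * T ^ (1/q)) :=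
        mul_le_mul_of_nonneg_left key (by positivity)
    _ = ((1/T)^(r/2) * (1/T)^((2-r)/2)) * ((∫ t, g t ^ 2 ∂μ) ^ (r/2) * T ^ ((2-r)/2)) := by
        rw [hinvp, hinvq, ← Real.rpow_add (by positivity : (0:ℝ) < 1/T),
          show r/2 + (2-r)/2 = 1 by ring, Real.rpow_one]
    _ = ((1/T)^(r/2) * (∫ t, g t ^ 2 ∂μ) ^ (r/2)) * (((1/T)*T) ^ ((2-r)/2)) := by
        rw [Real.mul_rpow (by positivity) hT.le]; ring
    _ = ((1/T) * ∫ t, g t ^ 2 ∂μ) ^ (r/2) := by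
        rw [one_div, inv_mul_cancel₀ hT.ne', Real.one_rpow, mul_one,
          ← Real.mul_rpow (by positivity) hI2]



theorem stmt_10 (C : ℝ)
    (S : ℕ → ℕ)
    (hSdef : ∀ N, S N =
      (((Finset.Icc 1 N ×ˢ Finset.Icc 1 N) ×ˢ (Finset.Icc 1 N ×ˢ Finset.Icc 1 N)).filter
        (fun q => q.1.1 * q.1.2 = q.2.1 * q.2.2)).card)
    (h2 : ∀ N : ℕ, Tendsto
      (fun T : ℝ => (1 / T) * ∫ t in Set.Ioc (0 : ℝ) T,
        ‖∑ n ∈ Finset.Icc 1 N, (n : ℂ) ^ (-(Complex.I * (t : ℂ)))‖ ^ 2)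
      atTop (nhds (N : ℝ)))
    (h4 : ∀ N : ℕ, Tendsto
      (fun T : ℝ => (1 / T) * ∫ t in Set.Ioc (0 : ℝ) T,
        ‖∑ n ∈ Finset.Icc 1 N, (n : ℂ) ^ (-(Complex.I * (t : ℂ)))‖ ^ 4)
      atTop (nhds (S N : ℝ)))
    (hS : ∀ N : ℕ, 2 ≤ N → (S N : ℝ) ≤ C * (N : ℝ) ^ 2 * Real.log N) :
    ∀ r : ℝ, 0 < r → r < 2 → ∃ Cr : ℝ, 0 < Cr ∧ ∀ N : ℕ, 2 ≤ N →
      Cr * (N : ℝ) ^ ((1 : ℝ) / 2) / (Real.log N) ^ (1 / r - 1 / 2)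
        ≤ liminf (fun T : ℝ => ((1 / T) * ∫ t in Set.Ioc (0 : ℝ) T,
            ‖∑ n ∈ Finset.Icc 1 N, (n : ℂ) ^ (-(Complex.I * (t : ℂ)))‖ ^ r) ^ (1 / r)) atTop := by
  intro r hr0 hr2
  set e : ℝ := 1/r - 1/2 with he
  have he0 : 0 < e := by
    have : 1/2 < 1/r := one_div_lt_one_div_of_lt hr0 hr2
    rw [he]; linarith
  set C' : ℝ := max C 1 with hC'
  have hC'1 : (1:ℝ) ≤ C' := le_max_right _ _
  have hC'0 : (0:ℝ) < C' := lt_of_lt_of_le one_pos hC'1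
  refine ⟨C' ^ (-e), Real.rpow_pos_of_pos hC'0 _, ?_⟩
  intro N hN
  have hNn : 0 < N := by omega
  have hN0 : (0:ℝ) < (N:ℝ) := by exact_mod_cast hNn
  have hlogN : 0 < Real.log N := Real.log_pos (by exact_mod_cast Nat.lt_of_lt_of_le one_lt_two hN)
  have hS1 : 1 ≤ S N := by
    rw [hSdef]
    refine Finset.card_pos.2 ⟨((1,1),(1,1)), ?_⟩
    simp [Finset.mem_filter, Finset.mem_Icc, Finset.mem_product]
    omega
  have hSpos : (0:ℝ) < (S N : ℝ) := by exact_mod_cast hS1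
  -- the Dirichlet polynomial and its norm
  set g : ℝ → ℝ := fun t => ‖∑ n ∈ Finset.Icc 1 N, (n : ℂ) ^ (-(Complex.I * (t : ℂ)))‖ with hgdef
  have hgc : Continuous g := by
    apply Continuous.norm
    apply continuous_finset_sum
    intro n hn
    have hn0 : (n:ℂ) ≠ 0 := by
      have : 1 ≤ n := (Finset.mem_Icc.1 hn).1
      exact_mod_cast Nat.cast_ne_zero.2 (by omega)
    exact Continuous.const_cpow ((continuous_const.mul Complex.continuous_ofReal).neg) (Or.inl hn0)
  have hg0 : ∀ t, 0 ≤ g t := fun t => norm_nonneg _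
  -- averaged moments
  set F2 : ℝ → ℝ := fun T => (1/T) * ∫ t in Set.Ioc (0:ℝ) T, g t ^ 2 with hF2
  set F4 : ℝ → ℝ := fun T => (1/T) * ∫ t in Set.Ioc (0:ℝ) T, g t ^ 4 with hF4
  set Fr : ℝ → ℝ := fun T => (1/T) * ∫ t in Set.Ioc (0:ℝ) T, g t ^ r with hFr
  have hF2nn : ∀ T, 0 ≤ F2 T := by
    intro T
    rcases le_or_gt T 0 with h | h
    · simp [hF2, Set.Ioc_eq_empty (not_lt.2 h)]
    · exact mul_nonneg (by positivity) (integral_nonneg fun t => pow_nonneg (hg0 t) _)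
  have hF4nn : ∀ T, 0 ≤ F4 T := by
    intro T
    rcases le_or_gt T 0 with h | h
    · simp [hF4, Set.Ioc_eq_empty (not_lt.2 h)]
    · exact mul_nonneg (by positivity) (integral_nonneg fun t => pow_nonneg (hg0 t) _)
  have hFrnn : ∀ T, 0 ≤ Fr T := by
    intro T
    rcases le_or_gt T 0 with h | h
    · simp [hFr, Set.Ioc_eq_empty (not_lt.2 h)]
    · exact mul_nonneg (by positivity) (integral_nonneg fun t => rpow_nonneg (hg0 t) _)
  set u : ℝ → ℝ := fun T => ((F2 T) ^ ((4-r)/2) / (F4 T) ^ ((2-r)/2)) ^ (1/r) with hu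
  set v : ℝ → ℝ := fun T => (Fr T) ^ (1/r) with hv
  set L : ℝ := ((N:ℝ) ^ ((4-r)/2) / (S N : ℝ) ^ ((2-r)/2)) ^ (1/r) with hL
  have htu : Tendsto u atTop (nhds L) := by
    apply Tendsto.rpow_const
    · exact Tendsto.div ((h2 N).rpow_const (Or.inr (by linarith)))
        ((h4 N).rpow_const (Or.inr (by linarith)))
        (ne_of_gt (Real.rpow_pos_of_pos hSpos _))
    · exact Or.inr (by positivity)
  have hle : ∀ᶠ T in atTop, u T ≤ v T := by
    filter_upwards [eventually_gt_atTop (0:ℝ)] with T hT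
    exact Real.rpow_le_rpow
      (div_nonneg (Real.rpow_nonneg (hF2nn T) _) (Real.rpow_nonneg (hF4nn T) _))
      (ratio_le hgc hg0 hr0 hr2 hT) (by positivity)
  have hubdd : atTop.IsBoundedUnder (· ≥ ·) u :=
    isBoundedUnder_of ⟨0, fun T => Real.rpow_nonneg
      (div_nonneg (Real.rpow_nonneg (hF2nn T) _) (Real.rpow_nonneg (hF4nn T) _)) _⟩
  have hvco : atTop.IsCoboundedUnder (· ≥ ·) v := by
    refine isCoboundedUnder_ge_of_eventually_le atTop (x := ((N:ℝ)+1) ^ ((1:ℝ)/2)) ?_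
    filter_upwards [eventually_gt_atTop (0:ℝ),
      (h2 N).eventually (eventually_le_nhds (lt_add_one (N:ℝ)))] with T hT hT2
    calc v T ≤ ((F2 T) ^ (r/2)) ^ (1/r) :=
          Real.rpow_le_rpow (hFrnn T) (power_mean hgc hg0 hr0 hr2 hT) (by positivity)
      _ = (F2 T) ^ ((1:ℝ)/2) := by
          rw [← Real.rpow_mul (hF2nn T), show r/2 * (1/r) = 1/2 by field_simp]
      _ ≤ ((N:ℝ)+1) ^ ((1:ℝ)/2) := Real.rpow_le_rpow (hF2nn T) hT2 (by norm_num)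
  have main : L ≤ liminf v atTop := by
    rw [← htu.liminf_eq]
    exact liminf_le_liminf hle hubdd hvco
  -- arithmetic: lower-bound L
  have hSle : (S N : ℝ) ≤ C' * (N:ℝ)^2 * Real.log N :=
    (hS N hN).trans (mul_le_mul_of_nonneg_right
      (mul_le_mul_of_nonneg_right (le_max_left C 1) (by positivity)) hlogN.le)
  have hexp2 : (2-r)/2 * (1/r) = e := by
    rw [he, eq_sub_iff_add_eq, div_mul_div_comm]; field_simp; ring
  have hexp1 : (4-r)/2 * (1/r) = 1/2 + 2*e := by
    rw [he, div_mul_div_comm]; field_simp; ring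
  have hLeq : L = (N:ℝ) ^ ((1:ℝ)/2 + 2*e) / (S N : ℝ) ^ e := by
    rw [hL, Real.div_rpow (Real.rpow_nonneg hN0.le _) (Real.rpow_nonneg hSpos.le _),
      ← Real.rpow_mul hN0.le, ← Real.rpow_mul hSpos.le, hexp1, hexp2]
  have hbig : (C' * (N:ℝ)^2 * Real.log N) ^ e = C' ^ e * (N:ℝ) ^ (2*e) * (Real.log N) ^ e := by
    rw [Real.mul_rpow (by positivity) hlogN.le, Real.mul_rpow hC'0.le (by positivity),
      ← Real.rpow_natCast (N:ℝ) 2, ← Real.rpow_mul hN0.le]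
    norm_num
  have hfinal : C' ^ (-e) * (N:ℝ) ^ ((1:ℝ)/2) / (Real.log N) ^ e
      = (N:ℝ) ^ ((1:ℝ)/2 + 2*e) / (C' * (N:ℝ)^2 * Real.log N) ^ e := by
    rw [hbig, Real.rpow_add hN0, Real.rpow_neg hC'0.le]
    have h1 : (0:ℝ) < C' ^ e := Real.rpow_pos_of_pos hC'0 _
    have h2 : (0:ℝ) < (N:ℝ) ^ (2*e) := Real.rpow_pos_of_pos hN0 _
    have h3 : (0:ℝ) < (Real.log N) ^ e := Real.rpow_pos_of_pos hlogN _
    field_simp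
  calc C' ^ (-e) * (N:ℝ) ^ ((1:ℝ)/2) / (Real.log N) ^ e
      = (N:ℝ) ^ ((1:ℝ)/2 + 2*e) / (C' * (N:ℝ)^2 * Real.log N) ^ e := hfinal
    _ ≤ (N:ℝ) ^ ((1:ℝ)/2 + 2*e) / (S N : ℝ) ^ e := by
        gcongr
    _ = L := hLeq.symm
    _ ≤ liminf v atTop := main
end
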